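/- If G is a connected graph with n(G) ≥ 5 and clique number ω(G) ≤ n(G) - 3, then dim_l(G) ≤ n(G) - 3. -/

import Mathlib

open SimpleGraph

variable {V : Type*}

/-- `W` is a local resolving set of `G`: any two adjacent vertices outside `W`
have different distance to some vertex of `W`. -/
def IsLocalResolvingSet [Fintype V] (G : SimpleGraph V) (W : Finset V) : Prop :=
  ∀ u v : V, u ∉ W → v ∉ W → G.Adj u v → ∃ w ∈ W, G.dist u w ≠ G.dist v w

/-- The local metric dimension of `G`: minimum cardinality of a local resolving set. -/
noncomputable def localDim [Fintype V] (G : SimpleGraph V) : ℕ :=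
  sInf {k | ∃ W : Finset V, IsLocalResolvingSet G W ∧ W.card = k}

/-- `K_n^-(λ,μ)`: complete graph on `Fin n` minus the edges of a complete bipartite
subgraph between `L = [0,lam)` and `M = [lam, lam+mu)`. -/
def KnMinus (n lam mu : ℕ) : SimpleGraph (Fin n) where
  Adj u v := u ≠ v ∧ ¬((u.val < lam ∧ lam ≤ v.val ∧ v.val < lam + mu) ∨
                       (v.val < lam ∧ lam ≤ u.val ∧ u.val < lam + mu))
  symm := by
    constructor
    intro u v ⟨h1, h2⟩
    exact ⟨h1.symm, fun h => h2 h.symm⟩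
  loopless := ⟨fun u h => h.1 rfl⟩

/-- The graph `Γ₁`: a `K₄` on `{0,1,2,3}` plus edges `0-4`, `1-4`, `0-5`, `2-5`
(vertices `0,…,5` standing for `v₁,…,v₆`). -/
def Gamma1 : SimpleGraph (Fin 6) :=
  SimpleGraph.fromRel (fun u v => ((u : ℕ), (v : ℕ)) ∈
    [(0,1),(0,2),(0,3),(1,2),(1,3),(2,3),(0,4),(1,4),(0,5),(2,5)])

/-- The graph `Γ₂ = Γ₁` plus the edge `v₅v₆`. -/
def Gamma2 : SimpleGraph (Fin 6) :=
  SimpleGraph.fromRel (fun u v => ((u : ℕ), (v : ℕ)) ∈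
    [(0,1),(0,2),(0,3),(1,2),(1,3),(2,3),(0,4),(1,4),(0,5),(2,5),(4,5)])

/-- `G_ℓ`: a universal vertex (`none`) joined to the disjoint union of `ℓ` triangles. -/
def Gell (l : ℕ) : SimpleGraph (Option (Fin l × Fin 3)) where
  Adj u v := u ≠ v ∧ ∀ x y, u = some x → v = some y → x.1 = y.1
  symm := by
    constructor
    intro u v ⟨h1, h2⟩
    exact ⟨h1.symm, fun x y hx hy => (h2 y x hy hx).symm⟩
  loopless := ⟨fun u h => h.1 rfl⟩

section LocalDimProof

variable {V : Type*}

/-- Resolving condition for a pair `(p,q)` relative to the triple `{u,v,x}`: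
if `p,q` are adjacent, some vertex outside the triple is adjacent to exactly one of them. -/
def Cond (G : SimpleGraph V) (u v x p q : V) : Prop :=
  G.Adj p q → ∃ w, w ≠ u ∧ w ≠ v ∧ w ≠ x ∧ ¬(G.Adj w p ↔ G.Adj w q)

/-- A triple of distinct vertices whose complement is a local resolving set. -/
def GoodTriple (G : SimpleGraph V) (u v x : V) : Prop :=
  u ≠ v ∧ u ≠ x ∧ v ≠ x ∧ Cond G u v x u v ∧ Cond G u v x u x ∧ Cond G u v x v x

lemma difl {G : SimpleGraph V} {w p q : V} (h1 : G.Adj w p) (h2 : ¬G.Adj w q) :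
    ¬(G.Adj w p ↔ G.Adj w q) := fun h => h2 (h.mp h1)

lemma difr {G : SimpleGraph V} {w p q : V} (h1 : ¬G.Adj w p) (h2 : G.Adj w q) :
    ¬(G.Adj w p ↔ G.Adj w q) := fun h => h1 (h.mpr h2)

lemma exists_cross_edge {G : SimpleGraph V} {A : V → Prop} :
    ∀ {a b : V}, G.Walk a b → A a → ¬A b → ∃ x y, A x ∧ ¬A y ∧ G.Adj x y := by
  intro a b w
  induction w with
  | nil => exact fun ha hb => absurd ha hb
  | @cons u v _ h p ih =>
      intro ha hb
      by_cases hv : A v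
      · exact ih hv hb
      · exact ⟨u, v, ha, hv, h⟩

/-- The "two cliques" case: `V` is partitioned into cliques `A` and `Aᶜ` with two disjoint
non-edges `a-b`, `d-c` across; then a good triple exists (using connectivity). -/
lemma bip {G : SimpleGraph V} (hconn : G.Connected) (A : V → Prop) {a d b c : V}
    (haA : A a) (hdA : A d) (hbA : ¬A b) (hcA : ¬A c)
    (had : a ≠ d) (hbc : b ≠ c)
    (hab : ¬G.Adj a b) (hdc : ¬G.Adj d c)
    (hA : ∀ ⦃x y⦄, A x → A y → x ≠ y → G.Adj x y)
    (hB : ∀ ⦃x y⦄, ¬A x → ¬A y → x ≠ y → G.Adj x y) :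
    ∃ u v x, GoodTriple G u v x := by
  have hba : b ≠ a := fun h => hbA (h ▸ haA)
  have hbd : b ≠ d := fun h => hbA (h ▸ hdA)
  have hca : c ≠ a := fun h => hcA (h ▸ haA)
  have hcd : c ≠ d := fun h => hcA (h ▸ hdA)
  have hadj_bc : G.Adj b c := hB hbA hcA hbc
  have hcb : G.Adj c b := hadj_bc.symm
  have hcd' : ¬G.Adj c d := fun h => hdc h.symm
  have hba' : ¬G.Adj b a := fun h => hab h.symm
  by_cases hC1 : ∃ z, z ≠ a ∧ z ≠ b ∧ z ≠ d ∧ ¬(G.Adj z a ↔ G.Adj z d)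
  · obtain ⟨z, hz1, hz2, hz3, hz4⟩ := hC1
    exact ⟨a, b, d, hba.symm, had, hbd, fun h => absurd h hab,
      fun _ => ⟨z, hz1, hz2, hz3, hz4⟩,
      fun _ => ⟨c, hca, hbc.symm, hcd, difl hcb hcd'⟩⟩
  by_cases hC2 : ∃ z, z ≠ a ∧ z ≠ c ∧ z ≠ d ∧ ¬(G.Adj z a ↔ G.Adj z d)
  · obtain ⟨z, hz1, hz2, hz3, hz4⟩ := hC2
    exact ⟨a, c, d, hca.symm, had, hcd,
      fun _ => ⟨b, hba, hbc, hbd, difr hba' hadj_bc⟩,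
      fun _ => ⟨z, hz1, hz2, hz3, hz4⟩,
      fun h => absurd h hcd'⟩
  push_neg at hC1 hC2
  have K1 : ∀ z, z ≠ a → z ≠ d → (G.Adj z a ↔ G.Adj z d) := by
    intro z hza hzd
    by_cases hzb : z = b
    · rw [hzb]; exact hC2 b hba hbc hbd
    · exact hC1 z hza hzb hzd
  have hbd' : ¬G.Adj b d := fun h => hba' ((K1 b hba hbd).mpr h)
  have hca' : ¬G.Adj c a := fun h => hcd' ((K1 c hca hcd).mp h)
  have hac' : ¬G.Adj a c := fun h => hca' h.symm
  by_cases hC3 : ∃ z, z ≠ a ∧ z ≠ b ∧ z ≠ c ∧ ¬(G.Adj z b ↔ G.Adj z c)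
  · obtain ⟨z, hz1, hz2, hz3, hz4⟩ := hC3
    exact ⟨a, b, c, hba.symm, hca.symm, hbc, fun h => absurd h hab, fun h => absurd h hac',
      fun _ => ⟨z, hz1, hz2, hz3, hz4⟩⟩
  by_cases hC4 : ∃ z, z ≠ b ∧ z ≠ c ∧ z ≠ d ∧ ¬(G.Adj z b ↔ G.Adj z c)
  · obtain ⟨z, hz1, hz2, hz3, hz4⟩ := hC4
    exact ⟨b, c, d, hbc, hbd, hcd, fun _ => ⟨z, hz1, hz2, hz3, hz4⟩,
      fun h => absurd h hbd', fun h => absurd h hcd'⟩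
  push_neg at hC3 hC4
  have K2 : ∀ z, z ≠ b → z ≠ c → (G.Adj z b ↔ G.Adj z c) := by
    intro z hzb hzc
    by_cases hza : z = a
    · rw [hza]; exact hC4 a hba.symm hca.symm had
    · exact hC3 z hza hzb hzc
  by_cases hC5 : ∃ u, A u ∧ u ≠ a ∧ u ≠ d ∧
      ∃ z, z ≠ a ∧ z ≠ b ∧ z ≠ u ∧ ¬(G.Adj z a ↔ G.Adj z u)
  · obtain ⟨u, huA, hua, hud, z, hz1, hz2, hz3, hz4⟩ := hC5
    have hbu : b ≠ u := fun h => hbA (h ▸ huA)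
    exact ⟨a, b, u, hba.symm, hua.symm, hbu,
      fun h => absurd h hab,
      fun _ => ⟨z, hz1, hz2, hz3, hz4⟩,
      fun _ => ⟨d, had.symm, hbd.symm, hud.symm,
        difr (fun h => hbd' h.symm) (hA hdA huA hud.symm)⟩⟩
  by_cases hC6 : ∃ u, A u ∧ u ≠ a ∧ u ≠ d ∧
      ∃ z, z ≠ c ∧ z ≠ d ∧ z ≠ u ∧ ¬(G.Adj z d ↔ G.Adj z u)
  · obtain ⟨u, huA, hua, hud, z, hz1, hz2, hz3, hz4⟩ := hC6
    have hcu : c ≠ u := fun h => hcA (h ▸ huA)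
    exact ⟨c, d, u, hcd, hcu, hud.symm,
      fun h => absurd h hcd',
      fun _ => ⟨a, hca.symm, had, hua.symm, difr hac' (hA haA huA hua.symm)⟩,
      fun _ => ⟨z, hz1, hz2, hz3, hz4⟩⟩
  by_cases hC7 : ∃ u, ¬A u ∧ u ≠ b ∧ u ≠ c ∧
      ∃ z, z ≠ a ∧ z ≠ b ∧ z ≠ u ∧ ¬(G.Adj z b ↔ G.Adj z u)
  · obtain ⟨u, huA, hub, huc, z, hz1, hz2, hz3, hz4⟩ := hC7
    have hau : a ≠ u := fun h => huA (h ▸ haA)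
    exact ⟨a, b, u, hba.symm, hau, hub.symm,
      fun h => absurd h hab,
      fun _ => ⟨c, hca, hbc.symm, huc.symm, difr hca' (hB hcA huA huc.symm)⟩,
      fun _ => ⟨z, hz1, hz2, hz3, hz4⟩⟩
  by_cases hC8 : ∃ u, ¬A u ∧ u ≠ b ∧ u ≠ c ∧
      ∃ z, z ≠ c ∧ z ≠ d ∧ z ≠ u ∧ ¬(G.Adj z c ↔ G.Adj z u)
  · obtain ⟨u, huA, hub, huc, z, hz1, hz2, hz3, hz4⟩ := hC8
    have hdu : d ≠ u := fun h => huA (h ▸ hdA)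
    exact ⟨c, d, u, hcd, huc.symm, hdu,
      fun h => absurd h hcd',
      fun _ => ⟨z, hz1, hz2, hz3, hz4⟩,
      fun _ => ⟨b, hbc, hbd, hub.symm, difr hbd' (hB hbA huA hub.symm)⟩⟩
  push_neg at hC5 hC6 hC7 hC8
  have KA : ∀ u, A u → ∀ z, ¬A z → (G.Adj z u ↔ G.Adj z a) := by
    intro u hu z hz
    have hza : z ≠ a := fun h => hz (h ▸ haA)
    have hzd : z ≠ d := fun h => hz (h ▸ hdA)
    have hzu : z ≠ u := fun h => hz (h ▸ hu)
    by_cases hua : u = a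
    · rw [hua]
    by_cases hud : u = d
    · rw [hud]; exact (K1 z hza hzd).symm
    by_cases hzb : z = b
    · rw [hzb]
      have hbu : b ≠ u := fun h => hbA (h ▸ hu)
      have h1 := hC6 u hu hua hud b hbc hbd hbu
      exact iff_of_false (fun h => hbd' (h1.mpr h)) hba'
    · exact (hC5 u hu hua hud z hza hzb hzu).symm
  have KB : ∀ u, ¬A u → ∀ z, A z → (G.Adj z u ↔ G.Adj z b) := by
    intro u hu z hz
    have hzb : z ≠ b := fun h => hbA (h ▸ hz)
    have hzc : z ≠ c := fun h => hcA (h ▸ hz)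
    have hzu : z ≠ u := fun h => hu (h ▸ hz)
    by_cases hub : u = b
    · rw [hub]
    by_cases huc : u = c
    · rw [huc]; exact (K2 z hzb hzc).symm
    by_cases hza : z = a
    · rw [hza]
      have hau : a ≠ u := fun h => hu (h ▸ haA)
      have h1 := hC8 u hu hub huc a hca.symm had hau
      exact iff_of_false (fun h => hac' (h1.mpr h)) hab
    · exact (hC7 u hu hub huc z hza hzb hzu).symm
  obtain ⟨w⟩ := hconn.preconnected a b
  obtain ⟨x0, y0, hx0, hy0, hxy⟩ := exists_cross_edge w haA hbA
  exact absurd ((KB y0 hy0 a haA).mp ((KA x0 hx0 y0 hy0).mp hxy.symm).symm) hab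

/-- The hard configuration: four vertices with non-edges `ab, cd, ac, bd` and
edges `ad, bc`, in a graph with no independent triple. -/
lemma deep {G : SimpleGraph V} (hconn : G.Connected)
    (hindep : ∀ x y z : V, x ≠ y → x ≠ z → y ≠ z → G.Adj x y ∨ G.Adj x z ∨ G.Adj y z)
    {a b c d : V}
    (hab0 : a ≠ b) (hac0 : a ≠ c) (had0 : a ≠ d) (hbc0 : b ≠ c) (hbd0 : b ≠ d) (hcd0 : c ≠ d)
    (hab : ¬G.Adj a b) (hcd : ¬G.Adj c d) (hac : ¬G.Adj a c) (hbd : ¬G.Adj b d)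
    (had : G.Adj a d) (hbc : G.Adj b c) :
    ∃ u v x, GoodTriple G u v x := by
  by_cases hT1 : ∃ w, w ≠ a ∧ w ≠ c ∧ w ≠ d ∧ ¬(G.Adj w a ↔ G.Adj w d)
  · obtain ⟨w, h1, h2, h3, h4⟩ := hT1
    exact ⟨a, c, d, hac0, had0, hcd0, fun h => absurd h hac, fun _ => ⟨w, h1, h2, h3, h4⟩,
      fun h => absurd h hcd⟩
  by_cases hT2 : ∃ w, w ≠ b ∧ w ≠ c ∧ w ≠ d ∧ ¬(G.Adj w b ↔ G.Adj w c)
  · obtain ⟨w, h1, h2, h3, h4⟩ := hT2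
    exact ⟨b, c, d, hbc0, hbd0, hcd0, fun _ => ⟨w, h1, h2, h3, h4⟩, fun h => absurd h hbd,
      fun h => absurd h hcd⟩
  push_neg at hT1 hT2
  by_cases hW : ∃ w, w ≠ a ∧ w ≠ b ∧ w ≠ c ∧ w ≠ d ∧ G.Adj w a ∧ G.Adj w b
  · obtain ⟨w0, h1, h2, h3, h4, h5, h6⟩ := hW
    have hw0d : G.Adj w0 d := (hT1 w0 h1 h3 h4).mp h5
    have hw0c : G.Adj w0 c := (hT2 w0 h2 h3 h4).mp h6
    exact ⟨a, b, w0, hab0, h1.symm, h2.symm,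
      fun h => absurd h hab,
      fun _ => ⟨c, hac0.symm, hbc0.symm, h3.symm, difr (fun h => hac h.symm) hw0c.symm⟩,
      fun _ => ⟨d, had0.symm, hbd0.symm, h4.symm, difr (fun h => hbd h.symm) hw0d.symm⟩⟩
  push_neg at hW
  have hAcl : ∀ ⦃x y : V⦄,
      (x = a ∨ x = d ∨ (x ≠ a ∧ x ≠ b ∧ x ≠ c ∧ x ≠ d ∧ G.Adj x a)) →
      (y = a ∨ y = d ∨ (y ≠ a ∧ y ≠ b ∧ y ≠ c ∧ y ≠ d ∧ G.Adj y a)) →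
      x ≠ y → G.Adj x y := by
    rintro x y (rfl | rfl | ⟨hx1, hx2, hx3, hx4, hx5⟩) (rfl | rfl | ⟨hy1, hy2, hy3, hy4, hy5⟩) hxy
    · exact absurd rfl hxy
    · exact had
    · exact hy5.symm
    · exact had.symm
    · exact absurd rfl hxy
    · exact ((hT1 y hy1 hy3 hy4).mp hy5).symm
    · exact hx5
    · exact (hT1 x hx1 hx3 hx4).mp hx5
    · by_contra hcon
      rcases hindep x y b hxy hx2 hy2 with h | h | h
      · exact hcon h
      · exact hW x hx1 hx2 hx3 hx4 hx5 h
      · exact hW y hy1 hy2 hy3 hy4 hy5 h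
  have hAmem : ∀ x : V, ¬(x = a ∨ x = d ∨ (x ≠ a ∧ x ≠ b ∧ x ≠ c ∧ x ≠ d ∧ G.Adj x a)) →
      x = b ∨ x = c ∨ (x ≠ a ∧ x ≠ b ∧ x ≠ c ∧ x ≠ d ∧ ¬G.Adj x a) := by
    intro x hx
    by_cases h1 : x = b
    · exact Or.inl h1
    by_cases h2 : x = c
    · exact Or.inr (Or.inl h2)
    have h3 : x ≠ a := fun h => hx (Or.inl h)
    have h4 : x ≠ d := fun h => hx (Or.inr (Or.inl h))
    exact Or.inr (Or.inr ⟨h3, h1, h2, h4,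
      fun h => hx (Or.inr (Or.inr ⟨h3, h1, h2, h4, h⟩))⟩)
  have hBcl : ∀ ⦃x y : V⦄,
      ¬(x = a ∨ x = d ∨ (x ≠ a ∧ x ≠ b ∧ x ≠ c ∧ x ≠ d ∧ G.Adj x a)) →
      ¬(y = a ∨ y = d ∨ (y ≠ a ∧ y ≠ b ∧ y ≠ c ∧ y ≠ d ∧ G.Adj y a)) →
      x ≠ y → G.Adj x y := by
    intro x y hx hy hxy
    rcases hAmem x hx with hxb | hxc | ⟨hx1, hx2, hx3, hx4, hx5⟩ <;>
      rcases hAmem y hy with hyb | hyc | ⟨hy1, hy2, hy3, hy4, hy5⟩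
    · exact absurd (hxb.trans hyb.symm) hxy
    · rw [hxb, hyc]; exact hbc
    · rw [hxb]
      rcases hindep a b y hab0 hy1.symm hy2.symm with h | h | h
      · exact absurd h hab
      · exact absurd h.symm hy5
      · exact h
    · rw [hxc, hyb]; exact hbc.symm
    · exact absurd (hxc.trans hyc.symm) hxy
    · rw [hxc]
      have hby : G.Adj b y := by
        rcases hindep a b y hab0 hy1.symm hy2.symm with h | h | h
        · exact absurd h hab
        · exact absurd h.symm hy5
        · exact h
      exact ((hT2 y hy2 hy3 hy4).mp hby.symm).symm
    · rw [hyb]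
      rcases hindep a b x hab0 hx1.symm hx2.symm with h | h | h
      · exact absurd h hab
      · exact absurd h.symm hx5
      · exact h.symm
    · rw [hyc]
      have hbx : G.Adj b x := by
        rcases hindep a b x hab0 hx1.symm hx2.symm with h | h | h
        · exact absurd h hab
        · exact absurd h.symm hx5
        · exact h
      exact (hT2 x hx2 hx3 hx4).mp hbx.symm
    · rcases hindep x y a hxy hx1 hy1 with h | h | h
      · exact h
      · exact absurd h hx5
      · exact absurd h hy5
  refine bip hconn (fun x => x = a ∨ x = d ∨ (x ≠ a ∧ x ≠ b ∧ x ≠ c ∧ x ≠ d ∧ G.Adj x a))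
    (Or.inl rfl) (Or.inr (Or.inl rfl)) ?_ ?_ had0 hbc0 hab (fun h => hcd h.symm) hAcl hBcl
  · rintro (h | h | ⟨_, h, _⟩)
    · exact hab0 h.symm
    · exact hbd0 h
    · exact h rfl
  · rintro (h | h | ⟨_, _, h, _⟩)
    · exact hac0 h.symm
    · exact hcd0 h
    · exact h rfl

lemma exists_good [Fintype V] (G : SimpleGraph V) (hconn : G.Connected)
    (hn : 5 ≤ Fintype.card V) (hw : G.cliqueNum ≤ Fintype.card V - 3) :
    ∃ u v x, GoodTriple G u v x := by
  classical
  by_cases hind : ∃ x y z : V, x ≠ y ∧ x ≠ z ∧ y ≠ z ∧ ¬G.Adj x y ∧ ¬G.Adj x z ∧ ¬G.Adj y z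
  · obtain ⟨x, y, z, h1, h2, h3, h4, h5, h6⟩ := hind
    exact ⟨x, y, z, h1, h2, h3, fun h => absurd h h4, fun h => absurd h h5,
      fun h => absurd h h6⟩
  have hindep : ∀ x y z : V, x ≠ y → x ≠ z → y ≠ z → G.Adj x y ∨ G.Adj x z ∨ G.Adj y z := by
    intro x y z h1 h2 h3
    by_contra hcon
    push_neg at hcon
    exact hind ⟨x, y, z, h1, h2, h3, hcon.1, hcon.2.1, hcon.2.2⟩
  have hclique : ∀ p : V, ¬(∀ x y : V, x ≠ p → y ≠ p → x ≠ y → G.Adj x y) := by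
    intro p hp
    have hcl : G.IsClique ((Finset.univ.erase p : Finset V) : Set V) := by
      intro x hx y hy hxy
      have hx' : x ≠ p := by simpa using hx
      have hy' : y ≠ p := by simpa using hy
      exact hp x y hx' hy' hxy
    have hcard : (Finset.univ.erase p).card ≤ G.cliqueNum :=
      SimpleGraph.IsClique.card_le_cliqueNum (tc := hcl)
    rw [Finset.card_erase_of_mem (Finset.mem_univ p), Finset.card_univ] at hcard
    omega
  have hne : ∃ a b : V, a ≠ b ∧ ¬G.Adj a b := by
    by_contra hcon
    push_neg at hcon
    have hcl : G.IsClique ((Finset.univ : Finset V) : Set V) :=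
      fun x _ y _ hxy => hcon x y hxy
    have hcard : (Finset.univ : Finset V).card ≤ G.cliqueNum :=
      SimpleGraph.IsClique.card_le_cliqueNum (tc := hcl)
    rw [Finset.card_univ] at hcard
    omega
  have h2ne : ∃ p q r s : V, p ≠ q ∧ p ≠ r ∧ p ≠ s ∧ q ≠ r ∧ q ≠ s ∧ r ≠ s ∧
      ¬G.Adj p q ∧ ¬G.Adj r s := by
    obtain ⟨a, b, hab0, hab⟩ := hne
    by_contra hno
    push_neg at hno
    by_cases h1 : ∃ x, x ≠ a ∧ x ≠ b ∧ ¬G.Adj b x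
    · by_cases h2 : ∃ y, y ≠ a ∧ y ≠ b ∧ ¬G.Adj a y
      · obtain ⟨x, hx1, hx2, hx3⟩ := h1
        obtain ⟨y, hy1, hy2, hy3⟩ := h2
        by_cases hxy : x = y
        · rw [hxy] at hx1 hx2 hx3
          rcases hindep a b y hab0 hx1.symm hx2.symm with h | h | h
          · exact hab h
          · exact hy3 h
          · exact hx3 h
        · exact hx3 (hno a y b x hy1.symm hab0 hx1.symm hy2 (fun h => hxy h.symm)
            hx2.symm hy3)
      · push_neg at h2
        refine hclique b ?_
        intro x y hxb hyb hxy
        by_cases hxa : x = a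
        · rw [hxa]; exact h2 y (fun h => hxy (hxa.trans h.symm)) hyb
        by_cases hya : y = a
        · rw [hya]; exact (h2 x (fun h => hxy (h.trans hya.symm)) hxb).symm
        by_contra hcon
        exact hab (hno x y a b hxy hxa hxb hya hyb hab0 hcon)
    · push_neg at h1
      refine hclique a ?_
      intro x y hxa hya hxy
      by_cases hxb : x = b
      · rw [hxb]; exact h1 y hya (fun h => hxy (hxb.trans h.symm))
      by_cases hyb : y = b
      · rw [hyb]; exact (h1 x hxa (fun h => hxy (h.trans hyb.symm))).symm
      by_contra hcon
      exact hab (hno x y a b hxy hxa hxb hya hyb hab0 hcon)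
  obtain ⟨a, b, c, d, hab0, hac0, had0, hbc0, hbd0, hcd0, hab, hcd⟩ := h2ne
  by_cases had : G.Adj a d
  · by_cases hbd : G.Adj b d
    · exact ⟨a, b, c, hab0, hac0, hbc0, fun h => absurd h hab,
        fun _ => ⟨d, had0.symm, hbd0.symm, hcd0.symm, difl had.symm (fun h => hcd h.symm)⟩,
        fun _ => ⟨d, had0.symm, hbd0.symm, hcd0.symm, difl hbd.symm (fun h => hcd h.symm)⟩⟩
    · by_cases hca : G.Adj c a
      · exact ⟨a, b, d, hab0, had0, hbd0, fun h => absurd h hab,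
          fun _ => ⟨c, hac0.symm, hbc0.symm, hcd0, difl hca hcd⟩,
          fun h => absurd h hbd⟩
      · have hbc : G.Adj b c := by
          rcases hindep a b c hab0 hac0 hbc0 with h | h | h
          · exact absurd h hab
          · exact absurd h.symm hca
          · exact h
        exact deep hconn hindep hab0 hac0 had0 hbc0 hbd0 hcd0 hab hcd
          (fun h => hca h.symm) hbd had hbc
  · have hbd2 : G.Adj b d := by
      rcases hindep a b d hab0 had0 hbd0 with h | h | h
      · exact absurd h hab
      · exact absurd h had
      · exact h
    by_cases hcb : G.Adj c b
    · exact ⟨a, b, d, hab0, had0, hbd0, fun h => absurd h hab,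
        fun h => absurd h had,
        fun _ => ⟨c, hac0.symm, hbc0.symm, hcd0, difl hcb hcd⟩⟩
    · have hca2 : G.Adj a c := by
        rcases hindep a b c hab0 hac0 hbc0 with h | h | h
        · exact absurd h hab
        · exact h
        · exact absurd h.symm hcb
      exact deep hconn hindep hab0 had0 hac0 hbd0 hbc0 hcd0.symm hab
        (fun h => hcd h.symm) had (fun h => hcb h.symm) hca2 hbd2

lemma goodTriple_resolving [Fintype V] [DecidableEq V] {G : SimpleGraph V} {u v x : V}
    (hg : GoodTriple G u v x) :
    IsLocalResolvingSet G (Finset.univ \ {u, v, x}) := by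
  obtain ⟨huv, hux, hvx, c1, c2, c3⟩ := hg
  have key : ∀ p q : V, (∃ w, w ≠ u ∧ w ≠ v ∧ w ≠ x ∧ ¬(G.Adj w p ↔ G.Adj w q)) →
      ∃ w ∈ Finset.univ \ ({u, v, x} : Finset V), G.dist p w ≠ G.dist q w := by
    rintro p q ⟨w, h1, h2, h3, h4⟩
    refine ⟨w, by simp [h1, h2, h3], fun hd => h4 ?_⟩
    have e1 : G.dist p w = 1 ↔ G.Adj w p := by
      rw [SimpleGraph.dist_comm]; exact SimpleGraph.dist_eq_one_iff_adj
    have e2 : G.dist q w = 1 ↔ G.Adj w q := by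
      rw [SimpleGraph.dist_comm]; exact SimpleGraph.dist_eq_one_iff_adj
    rw [← e1, ← e2, hd]
  have swap : ∀ p q : V, (∃ w, w ≠ u ∧ w ≠ v ∧ w ≠ x ∧ ¬(G.Adj w p ↔ G.Adj w q)) →
      ∃ w, w ≠ u ∧ w ≠ v ∧ w ≠ x ∧ ¬(G.Adj w q ↔ G.Adj w p) := by
    rintro p q ⟨w, h1, h2, h3, h4⟩
    exact ⟨w, h1, h2, h3, fun h => h4 h.symm⟩
  intro p q hp hq hadj
  have hp2 : p ∈ ({u, v, x} : Finset V) := by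
    by_contra hc
    exact hp (Finset.mem_sdiff.mpr ⟨Finset.mem_univ _, hc⟩)
  have hq2 : q ∈ ({u, v, x} : Finset V) := by
    by_contra hc
    exact hq (Finset.mem_sdiff.mpr ⟨Finset.mem_univ _, hc⟩)
  have hp' : p = u ∨ p = v ∨ p = x := by simpa using hp2
  have hq' : q = u ∨ q = v ∨ q = x := by simpa using hq2
  rcases hp' with rfl | rfl | rfl <;> rcases hq' with rfl | rfl | rfl
  · exact absurd hadj (G.loopless.irrefl _)
  · exact key _ _ (c1 hadj)
  · exact key _ _ (c2 hadj)
  · exact key _ _ (swap _ _ (c1 hadj.symm))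
  · exact absurd hadj (G.loopless.irrefl _)
  · exact key _ _ (c3 hadj)
  · exact key _ _ (swap _ _ (c2 hadj.symm))
  · exact key _ _ (swap _ _ (c3 hadj.symm))
  · exact absurd hadj (G.loopless.irrefl _)

end LocalDimProof

/-- If `G` is connected, `n(G) ≥ 5` and `ω(G) ≤ n(G) - 3`, then `dim_l(G) ≤ n(G) - 3`. -/
theorem stmt_7 [Fintype V] (G : SimpleGraph V) (hconn : G.Connected)
    (hn : 5 ≤ Fintype.card V) (hw : G.cliqueNum ≤ Fintype.card V - 3) :
    localDim G ≤ Fintype.card V - 3 := by 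
  classical
  obtain ⟨u, v, x, hg⟩ := exists_good G hconn hn hw
  have hres := goodTriple_resolving hg
  have hcard : (Finset.univ \ ({u, v, x} : Finset V)).card = Fintype.card V - 3 := by
    rw [Finset.card_sdiff_of_subset (Finset.subset_univ _), Finset.card_univ]
    congr 1
    rw [Finset.card_insert_of_notMem (by simp [hg.1, hg.2.1]),
      Finset.card_insert_of_notMem (by simp [hg.2.2.1]), Finset.card_singleton]
  unfold localDim
  exact Nat.sInf_le ⟨_, hres, hcard⟩
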